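/- Let σ be a permutation of a 2E-element set with V cycles and τ a fixed-point-free involution with E 2-cycles, and suppose ⟨σ, τ⟩ is transitive. If E ≥ 1 and F denotes the number of cycles of σ∘τ, then F ≥ 1 and V ≤ E + 1. -/

import Mathlib

open Equiv Finset

/-- Number of cycles of a permutation, counting fixed points as 1-cycles. -/
def cycleCount {α : Type*} [Fintype α] [DecidableEq α] (σ : Equiv.Perm α) : ℕ :=
  σ.cycleType.card + (Fintype.card α - σ.support.card)

/-- A fixed-point-free involution (a product of disjoint 2-cycles covering all points). -/
def IsFpfInvolution {α : Type*} (τ : Equiv.Perm α) : Prop :=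
  τ * τ = 1 ∧ ∀ x, τ x ≠ x

/-- The subgroup generated by σ and τ acts transitively. -/
def IsTransitivePair {α : Type*} (σ τ : Equiv.Perm α) : Prop :=
  ∀ x y : α, ∃ g ∈ Subgroup.closure ({σ, τ} : Set (Equiv.Perm α)), g x = y

section Aux

set_option linter.unusedSectionVars false

variable {α : Type*} [Fintype α] [DecidableEq α]

/-- The setoid whose classes are the cycles of `σ` (fixed points forming singleton classes). -/
def sameCycleSetoid (σ : Perm α) : Setoid α :=
  ⟨σ.SameCycle, ⟨Perm.SameCycle.refl σ, Perm.SameCycle.symm, Perm.SameCycle.trans⟩⟩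

instance (σ : Perm α) : DecidableEq (Quotient (sameCycleSetoid σ)) :=
  @Quotient.decidableEq _ (sameCycleSetoid σ)
    (fun a b => inferInstanceAs (Decidable (σ.SameCycle a b)))

instance (σ : Perm α) : Fintype (Quotient (sameCycleSetoid σ)) :=
  @Quotient.fintype _ _ (sameCycleSetoid σ)
    (fun a b => inferInstanceAs (Decidable (σ.SameCycle a b)))

def scmk (σ : Perm α) (x : α) : Quotient (sameCycleSetoid σ) := Quotient.mk _ x

lemma scmk_eq_iff {σ : Perm α} {x y : α} : scmk σ x = scmk σ y ↔ σ.SameCycle x y :=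
  ⟨Quotient.exact, fun h => Quotient.sound h⟩

lemma scmk_surj {σ : Perm α} (q : Quotient (sameCycleSetoid σ)) : ∃ x, scmk σ x = q :=
  ⟨q.out, Quotient.out_eq q⟩

lemma ttau {τ : Perm α} (hτ : IsFpfInvolution τ) (x : α) : τ (τ x) = x := by
  have : (τ * τ) x = (1 : Perm α) x := by rw [hτ.1]
  simpa using this

lemma mem_support_of_factor {σ c : Perm α} (hc : c ∈ σ.cycleFactorsFinset) {x : α}
    (hx : x ∈ c.support) : x ∈ σ.support := by
  rw [Perm.mem_cycleFactorsFinset_iff] at hc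
  rw [Perm.mem_support] at hx ⊢
  rw [← hc.2 x (Perm.mem_support.mpr hx)]
  exact hx

lemma sameCycle_mem_factor {σ c : Perm α} (hc : c ∈ σ.cycleFactorsFinset) {x y : α}
    (hx : x ∈ c.support) (h : σ.SameCycle x y) : y ∈ c.support := by
  have hcx : c = σ.cycleOf x := Equiv.Perm.cycle_is_cycleOf hx hc
  rw [hcx, Perm.mem_support_cycleOf_iff]
  exact ⟨h, mem_support_of_factor hc hx⟩

/-- The number of cycles of `σ` is at most the number of `SameCycle`-classes. -/
lemma cycleCount_le_card_quot (σ : Perm α) :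
    cycleCount σ ≤ Fintype.card (Quotient (sameCycleSetoid σ)) := by
  classical
  have hne : ∀ c : {c // c ∈ σ.cycleFactorsFinset}, ∃ x, x ∈ (c : Perm α).support := by
    rintro ⟨c, hc⟩
    exact ((Perm.mem_cycleFactorsFinset_iff.mp hc).1.nonempty_support)
  choose pt hpt using hne
  let f : ({c // c ∈ σ.cycleFactorsFinset} ⊕ {x // x ∈ σ.supportᶜ}) →
      Quotient (sameCycleSetoid σ) := fun z =>
    match z with
    | Sum.inl c => scmk σ (pt c)
    | Sum.inr x => scmk σ (x : α)
  have hfix : ∀ (x : {x // x ∈ σ.supportᶜ}) (y : α), σ.SameCycle (x : α) y → y = (x : α) := by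
    rintro ⟨x, hx⟩ y ⟨i, hi⟩
    have hfx : σ x = x := by simpa [Perm.notMem_support] using hx
    simp only at hi
    rw [← hi, Perm.zpow_apply_eq_self_of_apply_eq_self hfx]
  have hinj : Function.Injective f := by
    rintro (c1 | x1) (c2 | x2) h <;> simp only [f, scmk_eq_iff] at h
    · have h1 : pt c2 ∈ (c1 : Perm α).support := sameCycle_mem_factor c1.2 (hpt c1) h
      have e1 : (c1 : Perm α) = σ.cycleOf (pt c2) := Equiv.Perm.cycle_is_cycleOf h1 c1.2
      have e2 : (c2 : Perm α) = σ.cycleOf (pt c2) := Equiv.Perm.cycle_is_cycleOf (hpt c2) c2.2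
      exact congrArg Sum.inl (Subtype.ext (e1.trans e2.symm))
    · exfalso
      have := hfix x2 (pt c1) h.symm
      have := mem_support_of_factor c1.2 (hpt c1)
      rw [‹pt c1 = (x2 : α)›] at this
      simpa using (Finset.mem_compl.mp x2.2) this
    · exfalso
      have := hfix x1 (pt c2) h
      have := mem_support_of_factor c2.2 (hpt c2)
      rw [‹pt c2 = (x1 : α)›] at this
      simpa using (Finset.mem_compl.mp x1.2) this
    · exact congrArg Sum.inr (Subtype.ext (hfix x1 (x2 : α) h).symm)
  have := Fintype.card_le_of_injective f hinj
  have hcard : Fintype.card ({c // c ∈ σ.cycleFactorsFinset} ⊕ {x // x ∈ σ.supportᶜ}) =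
      σ.cycleFactorsFinset.card + (Fintype.card α - σ.support.card) := by
    rw [Fintype.card_sum, Fintype.card_coe, Fintype.card_coe, Finset.card_compl]
  have hct : σ.cycleType.card = σ.cycleFactorsFinset.card := by
    simp [Equiv.Perm.cycleType_def]
  rw [cycleCount, hct]
  omega

/-- One edge-step between σ-cycle classes along an edge {x, τ x}. -/
def stepRel (σ τ : Perm α) (q q' : Quotient (sameCycleSetoid σ)) : Prop :=
  ∃ x : α, scmk σ x = q ∧ scmk σ (τ x) = q'

/-- Paths of length `n` in the graph of σ-cycles joined by τ-edges. -/
def reachN (σ τ : Perm α) :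
    ℕ → Quotient (sameCycleSetoid σ) → Quotient (sameCycleSetoid σ) → Prop
  | 0, q, q' => q = q'
  | n + 1, q, q' => ∃ q'', reachN σ τ n q q'' ∧ stepRel σ τ q'' q'

lemma reachN_trans {σ τ : Perm α} {n m : ℕ} {q q' q'' : Quotient (sameCycleSetoid σ)}
    (h1 : reachN σ τ n q q') (h2 : reachN σ τ m q' q'') : reachN σ τ (m + n) q q'' := by
  induction m generalizing q'' with
  | zero => rw [show q'' = q' from h2.symm, Nat.zero_add]; exact h1
  | succ m ih =>
    obtain ⟨p, hp, hs⟩ := h2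
    rw [Nat.succ_add]
    exact ⟨p, ih hp, hs⟩

lemma reachN_symm {σ τ : Perm α} (hτ : IsFpfInvolution τ) {n : ℕ}
    {q q' : Quotient (sameCycleSetoid σ)}
    (h : reachN σ τ n q q') : ∃ m, reachN σ τ m q' q := by
  induction n generalizing q' with
  | zero => exact ⟨0, h.symm⟩
  | succ n ih =>
    obtain ⟨p, hp, x, hx1, hx2⟩ := h
    obtain ⟨m, hm⟩ := ih hp
    refine ⟨m + 1, reachN_trans (n := 1) ?_ hm⟩
    exact ⟨q', rfl, τ x, hx2, by rwa [ttau hτ]⟩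

/-- Transitivity of ⟨σ, τ⟩ makes the graph of σ-cycles connected. -/
lemma reach_all {σ τ : Perm α} (hτ : IsFpfInvolution τ) (htrans : IsTransitivePair σ τ)
    (x0 : α) (q : Quotient (sameCycleSetoid σ)) : ∃ n, reachN σ τ n (scmk σ x0) q := by
  obtain ⟨y, rfl⟩ := scmk_surj q
  obtain ⟨g, hg, hgx⟩ := htrans x0 y
  suffices H : ∀ x : α, ∃ n, reachN σ τ n (scmk σ x) (scmk σ (g x)) by
    obtain ⟨n, hn⟩ := H x0
    rw [hgx] at hn
    exact ⟨n, hn⟩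
  clear hgx
  induction hg using Subgroup.closure_induction with
  | mem g hgen =>
    intro x
    rcases hgen with rfl | rfl
    · exact ⟨0, Quotient.sound ⟨1, by simp⟩⟩
    · exact ⟨1, scmk σ x, rfl, x, rfl, rfl⟩
  | one => exact fun x => ⟨0, rfl⟩
  | mul a b _ _ ha hb =>
    intro x
    obtain ⟨n, hn⟩ := hb x
    obtain ⟨m, hm⟩ := ha (b x)
    exact ⟨m + n, by simpa [Perm.mul_apply] using reachN_trans hn hm⟩
  | inv a _ ha =>
    intro x
    obtain ⟨n, hn⟩ := ha (a⁻¹ x)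
    rw [show a (a⁻¹ x) = x from by simp] at hn
    exact reachN_symm hτ hn

/-- Tree bound: the number of σ-cycle classes is at most the number of τ-edges plus one. -/
lemma card_quot_le {σ τ : Perm α} [Nonempty α]
    (hτ : IsFpfInvolution τ) (htrans : IsTransitivePair σ τ) :
    Fintype.card (Quotient (sameCycleSetoid σ)) ≤
      (univ.image fun x => ({x, τ x} : Finset α)).card + 1 := by
  classical
  obtain ⟨x0⟩ := ‹Nonempty α›
  set q0 : Quotient (sameCycleSetoid σ) := scmk σ x0 with hq0
  have hre : ∀ q, ∃ n, reachN σ τ n q0 q := reach_all hτ htrans x0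
  set d : Quotient (sameCycleSetoid σ) → ℕ := fun q => Nat.find (hre q) with hd
  have hsel : ∀ q, ∃ x : α, q ≠ q0 → (scmk σ (τ x) = q ∧ d (scmk σ x) < d q) := by
    intro q
    by_cases hq : q = q0
    · exact ⟨x0, fun h => absurd hq h⟩
    · have hfind := Nat.find_spec (hre q)
      rcases hn : Nat.find (hre q) with _ | m
      · rw [hn] at hfind
        exact absurd hfind.symm hq
      · rw [hn] at hfind
        obtain ⟨q', hq', x, hx1, hx2⟩ := hfind
        refine ⟨x, fun _ => ⟨hx2, ?_⟩⟩
        have h1 : d q' ≤ m := Nat.find_le hq'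
        have : d q = m + 1 := by rw [hd]; exact hn
        rw [hx1]
        omega
  choose ed hed using hsel
  have hkey : Fintype.card (Quotient (sameCycleSetoid σ)) - 1 ≤
      (univ.image fun x => ({x, τ x} : Finset α)).card := by
    rw [← card_univ, ← Finset.card_erase_of_mem (mem_univ q0)]
    apply Finset.card_le_card_of_injOn (fun q => ({ed q, τ (ed q)} : Finset α))
    · intro q _
      exact mem_image_of_mem _ (mem_univ _)
    · intro q1 hq1 q2 hq2 h
      simp only [coe_erase, Set.mem_diff, mem_coe, Set.mem_singleton_iff] at hq1 hq2
      obtain ⟨h1t, h1d⟩ := hed q1 hq1.2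
      obtain ⟨h2t, h2d⟩ := hed q2 hq2.2
      by_contra hne
      have h' : ({ed q1, τ (ed q1)} : Finset α) = {ed q2, τ (ed q2)} := h
      have hmem : ed q1 ∈ ({ed q2, τ (ed q2)} : Finset α) := by
        rw [← h']; exact mem_insert_self _ _
      rcases Finset.mem_insert.mp hmem with he | he
      · rw [he] at h1t
        exact hne (h1t.symm.trans h2t)
      · rw [Finset.mem_singleton] at he
        have ht1 : τ (ed q2) = ed q1 := he.symm
        have ht2 : τ (ed q1) = ed q2 := by rw [he, ttau hτ]
        have hA : q1 = scmk σ (ed q2) := by rw [← h1t, ht2]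
        have hB : q2 = scmk σ (ed q1) := by rw [← h2t, ht1]
        have l1 : d q1 < d q2 := by rw [hA]; exact h2d
        have l2 : d q2 < d q1 := by rw [hB]; exact h1d
        omega
  omega

/-- A fixed-point-free involution on a `2E`-point set has exactly `E` edges `{x, τ x}`. -/
lemma two_mul_card_edges {τ : Perm α} (hτ : IsFpfInvolution τ) :
    2 * (univ.image fun x => ({x, τ x} : Finset α)).card = Fintype.card α := by
  classical
  rw [← card_univ, Finset.card_eq_sum_card_image (fun x => ({x, τ x} : Finset α)) univ]
  rw [Finset.sum_congr rfl (fun e he => ?_), Finset.sum_const, smul_eq_mul, mul_comm]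
  obtain ⟨x, -, hx⟩ := Finset.mem_image.mp he
  have hfil : (univ.filter fun y => ({y, τ y} : Finset α) = e) = {x, τ x} := by
    ext y
    simp only [Finset.mem_filter, Finset.mem_univ, true_and, ← hx]
    constructor
    · intro hy
      rw [← hy]
      exact mem_insert_self _ _
    · intro hy
      rcases Finset.mem_insert.mp hy with rfl | hy
      · rfl
      · rw [Finset.mem_singleton] at hy
        subst hy
        rw [ttau hτ, Finset.pair_comm]
  rw [hfil, Finset.card_insert_of_notMem (by simp [Ne.symm (hτ.2 x)]), Finset.card_singleton]

/-- Any permutation of a nonempty finite type has at least one cycle. -/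
lemma one_le_cycleCount [Nonempty α] (π : Perm α) : 1 ≤ cycleCount π := by
  rcases eq_or_ne π 1 with rfl | h
  · have : 0 < Fintype.card α := Fintype.card_pos
    simp only [cycleCount, Equiv.Perm.cycleType_one, Equiv.Perm.support_one]
    simp
    omega
  · have hct : π.cycleType ≠ 0 := by simpa [Equiv.Perm.cycleType_eq_zero] using h
    have := Multiset.card_pos.mpr hct
    unfold cycleCount
    omega

end Aux

theorem tree_bound (E : ℕ) (σ τ : Equiv.Perm (Fin (2 * E)))
    (hτ : IsFpfInvolution τ) (htrans : IsTransitivePair σ τ) (hE : 1 ≤ E) :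
    1 ≤ cycleCount (σ * τ) ∧ cycleCount σ ≤ E + 1 := by
  have hpos : 0 < 2 * E := by omega
  haveI : Nonempty (Fin (2 * E)) := Fin.pos_iff_nonempty.mp hpos
  refine ⟨one_le_cycleCount _, ?_⟩
  have h1 := cycleCount_le_card_quot σ
  have h2 := card_quot_le hτ htrans
  have h3 := two_mul_card_edges hτ
  rw [Fintype.card_fin] at h3
  omega
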